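/- If x : ℕ → {0,1} is classical normal (i.e., the binary sequence x is normal in the classical sense), then for every n ∈ ℕ the sequence k ↦ x(n·k) is also classical normal. Equivalently, if A ⊆ ℕ is a classical normal set, then A/n = {m ∈ ℕ : n·m ∈ A} is classical normal for every n ∈ ℕ. -/

import Mathlib

open Filter

/- `x : ℕ → {0,1}` is a classical normal binary sequence: for every nonempty finite
`K ⊆ {1,2,…}` and every block `B : K → {0,1}`,
`(1/n) · |{m ∈ {1,…,n} : ∀ k ∈ K, x (k+m) = B k}| → 2^{-|K|}`. -/
def ClassicalNormalFun (x : ℕ → Bool) : Prop :=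
  ∀ K : Finset ℕ, K.Nonempty → (∀ k ∈ K, 0 < k) → ∀ B : ℕ → Bool,
    Tendsto
      (fun n =>
        (((Finset.Icc 1 n).filter (fun m => ∀ k ∈ K, x (k + m) = B k)).card : ℝ) / n)
      atTop (nhds ((1 / 2 : ℝ) ^ K.card))


/-- Telescoping sum over `Icc 1 N`. -/
lemma telesum (g : ℕ → ℝ) (N : ℕ) :
    (∑ m ∈ Finset.Icc 1 N, (g (m + 1) - g m)) = g (N + 1) - g 1 := by
  have h : Finset.Icc 1 N = Finset.Ico 1 (N + 1) := by rw [Finset.Ico_add_one_right_eq_Icc]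
  rw [h, Finset.sum_Ico_eq_sum_range]
  simp only [Nat.add_sub_cancel]
  have h2 := Finset.sum_range_sub (fun i => g (1 + i)) N
  calc (∑ i ∈ Finset.range N, (g (1 + i + 1) - g (1 + i)))
      = ∑ i ∈ Finset.range N, (g (1 + (i + 1)) - g (1 + i)) := rfl
    _ = g (1 + N) - g (1 + 0) := h2
    _ = g (N + 1) - g 1 := by rw [add_comm 1 N, add_zero]

lemma sum_shift_bound (g : ℕ → ℝ) (hg0 : ∀ m, 0 ≤ g m) (hg1 : ∀ m, g m ≤ 1) (a N : ℕ) :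
    |(∑ m ∈ Finset.Icc 1 N, g (m + a)) - ∑ m ∈ Finset.Icc 1 N, g m| ≤ a := by
  induction a with
  | zero => simp
  | succ a ih =>
    have h1 : (∑ m ∈ Finset.Icc 1 N, g (m + (a + 1))) - (∑ m ∈ Finset.Icc 1 N, g (m + a))
        = g (N + 1 + a) - g (1 + a) := by
      rw [← Finset.sum_sub_distrib]
      have := telesum (fun m => g (m + a)) N
      rw [← this]
      apply Finset.sum_congr rfl
      intro m _
      congr 2
      omega
    have hb : |g (N + 1 + a) - g (1 + a)| ≤ 1 := by
      rw [abs_le]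
      constructor <;> nlinarith [hg0 (N + 1 + a), hg1 (N + 1 + a), hg0 (1 + a), hg1 (1 + a)]
    calc |(∑ m ∈ Finset.Icc 1 N, g (m + (a + 1))) - ∑ m ∈ Finset.Icc 1 N, g m|
        ≤ |(∑ m ∈ Finset.Icc 1 N, g (m + (a + 1))) - (∑ m ∈ Finset.Icc 1 N, g (m + a))|
          + |(∑ m ∈ Finset.Icc 1 N, g (m + a)) - ∑ m ∈ Finset.Icc 1 N, g m| := abs_sub_le _ _ _
      _ ≤ 1 + a := by rw [h1]; exact add_le_add hb ih
      _ = (a + 1 : ℕ) := by push_cast; ring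

/-- Shifting the argument does not change the Cesàro limit. -/
lemma avg_shift (g : ℕ → ℝ) (hg0 : ∀ m, 0 ≤ g m) (hg1 : ∀ m, g m ≤ 1) (a : ℕ) (L : ℝ)
    (h : Tendsto (fun N : ℕ => (∑ m ∈ Finset.Icc 1 N, g m) / N) atTop (nhds L)) :
    Tendsto (fun N : ℕ => (∑ m ∈ Finset.Icc 1 N, g (m + a)) / N) atTop (nhds L) := by
  have hdiff : Tendsto (fun N : ℕ =>
      ((∑ m ∈ Finset.Icc 1 N, g (m + a)) - ∑ m ∈ Finset.Icc 1 N, g m) / N) atTop (nhds 0) := by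
    refine squeeze_zero_norm ?_ (tendsto_const_div_atTop_nhds_zero_nat (a : ℝ))
    intro N
    rw [Real.norm_eq_abs, abs_div, Nat.abs_cast]
    rcases Nat.eq_zero_or_pos N with h0 | hpos
    · simp [h0]
    · have : (0:ℝ) < N := by exact_mod_cast hpos
      gcongr; exact sum_shift_bound g hg0 hg1 a N

  have h2 := h.add hdiff
  rw [add_zero] at h2
  convert h2 using 2 with N
  ring

lemma eventually_abs_le_of_tendsto_avg (u : ℕ → ℝ) (L : ℝ)
    (h : Tendsto (fun N : ℕ => u N / N) atTop (nhds L)) (δ : ℝ) (hδ : 0 < δ) :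
    ∀ᶠ N : ℕ in atTop, |u N - L * N| ≤ δ * N := by
  obtain ⟨N₀, hN₀⟩ := Metric.tendsto_atTop.mp h δ hδ
  filter_upwards [eventually_ge_atTop (max N₀ 1)] with N hN
  have hN1 : 1 ≤ N := le_trans (le_max_right _ _) hN
  have hd := hN₀ N (le_trans (le_max_left _ _) hN)
  rw [Real.dist_eq] at hd
  have hNpos : (0 : ℝ) < N := by exact_mod_cast hN1
  have he : u N - L * N = (u N / N - L) * N := by field_simp
  rw [he, abs_mul, abs_of_pos hNpos]
  exact mul_le_mul_of_nonneg_right hd.le hNpos.le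

lemma sum_ap_le (w : ℕ → ℝ) (hw : ∀ m, 0 ≤ w m) (n N : ℕ) (hn : 0 < n) :
    (∑ q ∈ Finset.Icc 1 N, w (n * q)) ≤ ∑ m ∈ Finset.Icc 1 (n * N), w m := by
  have hinj : Function.Injective (fun q => n * q) :=
    fun a b hab => Nat.eq_of_mul_eq_mul_left hn hab
  rw [← Finset.sum_image (fun a _ b _ hab => hinj hab)]
  apply Finset.sum_le_sum_of_subset_of_nonneg
  · intro m hm
    simp only [Finset.mem_image, Finset.mem_Icc] at hm ⊢
    obtain ⟨q, ⟨hq1, hq2⟩, rfl⟩ := hm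
    exact ⟨Nat.one_le_iff_ne_zero.mpr (Nat.mul_ne_zero hn.ne' (by omega)),
      Nat.mul_le_mul_left n hq2⟩
  · intro i _ _; exact hw i

lemma near_card_le (H M : ℕ) :
    (((Finset.range H ×ˢ Finset.range H).filter
      (fun p : ℕ × ℕ => ¬(M ≤ p.2 - p.1 ∨ M ≤ p.1 - p.2))).card) ≤ H * (2 * M) := by
  have h := Finset.card_le_card_of_injOn (fun p : ℕ × ℕ => (p.1, p.2 + M - p.1))
    (s := (Finset.range H ×ˢ Finset.range H).filter
      (fun p : ℕ × ℕ => ¬(M ≤ p.2 - p.1 ∨ M ≤ p.1 - p.2)))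
    (t := Finset.range H ×ˢ Finset.range (2 * M)) ?_ ?_
  · calc _ ≤ (Finset.range H ×ˢ Finset.range (2 * M)).card := h
      _ = H * (2 * M) := by rw [Finset.card_product, Finset.card_range, Finset.card_range]
  · intro p hp
    simp only [Finset.mem_coe, Finset.mem_filter, Finset.mem_product, Finset.mem_range] at hp ⊢
    omega
  · intro p hp q hq hpq
    simp only [Finset.mem_coe, Finset.mem_filter, Finset.mem_product, Finset.mem_range] at hp hq
    simp only [Prod.mk.injEq] at hpq
    obtain ⟨h1, h2⟩ := hpq
    have : p.2 = q.2 := by omega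
    exact Prod.ext h1 this

set_option maxHeartbeats 1000000 in
theorem key_lemma (f : ℕ → ℝ) (hf0 : ∀ m, 0 ≤ f m) (hf1 : ∀ m, f m ≤ 1)
    (n M : ℕ) (hn : 0 < n) (hM : 1 ≤ M) (E : ℝ) (hE0 : 0 ≤ E) (hE1 : E ≤ 1)
    (C1 : Tendsto (fun N : ℕ => (∑ m ∈ Finset.Icc 1 N, f m) / N) atTop (nhds E))
    (C2 : ∀ d : ℕ, M ≤ d →
      Tendsto (fun N : ℕ => (∑ m ∈ Finset.Icc 1 N, f m * f (m + n * d)) / N)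
        atTop (nhds (E ^ 2))) :
    Tendsto (fun N : ℕ => (∑ q ∈ Finset.Icc 1 N, f (n * q)) / N) atTop (nhds E) := by
  rw [Metric.tendsto_nhds]
  intro ε hε
  have hnR : (0 : ℝ) < n := by exact_mod_cast hn
  set δ : ℝ := ε ^ 2 / (48 * n) with hδdef
  have hδ : 0 < δ := by positivity
  obtain ⟨H₀, hH₀⟩ := exists_nat_ge ((n : ℝ) * (2 * M) * (1 + δ) * 16 / ε ^ 2)
  set H : ℕ := H₀ + 1 with hHdef
  have hH1 : 1 ≤ H := Nat.le_add_left 1 H₀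
  have hHR : (0 : ℝ) < H := by exact_mod_cast Nat.succ_pos H₀
  have hHbound : (n : ℝ) * (2 * M) * (1 + δ) / H ≤ ε ^ 2 / 16 := by
    rw [div_le_div_iff₀ hHR (by norm_num : (0 : ℝ) < 16)]
    have hh : (n : ℝ) * (2 * M) * (1 + δ) * 16 / ε ^ 2 ≤ H := by
      refine le_trans hH₀ ?_
      exact_mod_cast Nat.le_succ H₀
    have := (div_le_iff₀ (by positivity : (0 : ℝ) < ε ^ 2)).mp hh
    linarith
  set A : ℕ → ℝ := fun m => (∑ h ∈ Finset.range H, f (m + n * h)) / H with hAdef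
  -- eventual bound for single shifted sums
  have hEV1 : ∀ᶠ N : ℕ in atTop, ∀ h ∈ Finset.range H,
      |(∑ m ∈ Finset.Icc 1 N, f (m + n * h)) - E * N| ≤ δ * N := by
    rw [Filter.eventually_all_finset]
    intro h _
    exact eventually_abs_le_of_tendsto_avg _ _ (avg_shift f hf0 hf1 (n * h) E C1) δ hδ
  -- eventual bound for far correlation sums
  have hpair : ∀ p : ℕ × ℕ, (M ≤ p.2 - p.1 ∨ M ≤ p.1 - p.2) →
      Tendsto (fun N : ℕ => (∑ m ∈ Finset.Icc 1 N, f (m + n * p.1) * f (m + n * p.2)) / N)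
        atTop (nhds (E ^ 2)) := by
    intro p hp
    have main : ∀ a b : ℕ, M ≤ b - a →
        Tendsto (fun N : ℕ => (∑ m ∈ Finset.Icc 1 N, f (m + n * a) * f (m + n * b)) / N)
          atTop (nhds (E ^ 2)) := by
      intro a b hab
      set d : ℕ := b - a with hddef
      have hd : M ≤ d := hab
      have h12 : a + d = b := by omega
      have shifted := avg_shift (fun m => f m * f (m + n * d))
        (fun m => mul_nonneg (hf0 m) (hf0 _))
        (fun m => mul_le_one₀ (hf1 m) (hf0 _) (hf1 _)) (n * a) (E ^ 2) (C2 d hd)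
      apply shifted.congr
      intro N
      congr 1
      apply Finset.sum_congr rfl
      intro m _
      congr 2
      rw [← h12, Nat.mul_add]
      ring
    rcases hp with hp | hp
    · exact main p.1 p.2 hp
    · have := main p.2 p.1 hp
      apply this.congr
      intro N
      congr 1
      apply Finset.sum_congr rfl
      intro m _
      exact mul_comm _ _
  have hEV2 : ∀ᶠ N : ℕ in atTop, ∀ p ∈ (Finset.range H ×ˢ Finset.range H).filter
      (fun p : ℕ × ℕ => M ≤ p.2 - p.1 ∨ M ≤ p.1 - p.2),
      |(∑ m ∈ Finset.Icc 1 N, f (m + n * p.1) * f (m + n * p.2)) - E ^ 2 * N| ≤ δ * N := by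
    rw [Filter.eventually_all_finset]
    intro p hpmem
    simp only [Finset.mem_filter] at hpmem
    exact eventually_abs_le_of_tendsto_avg _ _ (hpair p hpmem.2) δ hδ
  have hHN : ∀ᶠ N : ℕ in atTop, (H : ℝ) / N < ε / 4 := by
    have h0 := tendsto_const_div_atTop_nhds_zero_nat (H : ℝ)
    exact h0.eventually (tendsto_id.eventually_lt_const (by positivity)) |>.mono
      (fun _ h => h)
  have htop : Tendsto (fun N : ℕ => n * N) atTop atTop :=
    tendsto_atTop_mono (fun N => Nat.le_mul_of_pos_left N hn) tendsto_id
  filter_upwards [htop.eventually hEV1, htop.eventually hEV2, hHN, eventually_ge_atTop 1]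
    with N h1 h2 h3 hN1
  have hNpos : (0 : ℝ) < N := by exact_mod_cast hN1
  have hNR : ((n * N : ℕ) : ℝ) = (n : ℝ) * N := by push_cast; ring
  rw [hNR] at h1 h2  -- might fail if no occurrence; check
  -- Step 1
  have hterm : ∀ h ∈ Finset.range H,
      |(∑ q ∈ Finset.Icc 1 N, f (n * q + n * h)) - ∑ q ∈ Finset.Icc 1 N, f (n * q)| ≤ h := by
    intro h _
    have hb := sum_shift_bound (fun q => f (n * q)) (fun q => hf0 _) (fun q => hf1 _) h N
    simp only [Nat.mul_add] at hb
    exact hb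
  have hAS : (∑ q ∈ Finset.Icc 1 N, A (n * q))
      = (∑ h ∈ Finset.range H, ∑ q ∈ Finset.Icc 1 N, f (n * q + n * h)) / H := by
    simp only [hAdef]
    rw [← Finset.sum_div, Finset.sum_comm]
  have hclaim1 : |(∑ q ∈ Finset.Icc 1 N, A (n * q)) - ∑ q ∈ Finset.Icc 1 N, f (n * q)|
      ≤ H := by
    rw [hAS]
    have hnum : (∑ h ∈ Finset.range H, ∑ q ∈ Finset.Icc 1 N, f (n * q + n * h)) / H
        - (∑ q ∈ Finset.Icc 1 N, f (n * q))
        = (∑ h ∈ Finset.range H, ((∑ q ∈ Finset.Icc 1 N, f (n * q + n * h))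
            - ∑ q ∈ Finset.Icc 1 N, f (n * q))) / H := by
      rw [Finset.sum_sub_distrib, Finset.sum_const, Finset.card_range, nsmul_eq_mul]
      field_simp
    rw [hnum, abs_div, Nat.abs_cast, div_le_iff₀ hHR]
    calc |∑ h ∈ Finset.range H, ((∑ q ∈ Finset.Icc 1 N, f (n * q + n * h))
            - ∑ q ∈ Finset.Icc 1 N, f (n * q))|
        ≤ ∑ h ∈ Finset.range H, |(∑ q ∈ Finset.Icc 1 N, f (n * q + n * h))
            - ∑ q ∈ Finset.Icc 1 N, f (n * q)| := Finset.abs_sum_le_sum_abs _ _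
      _ ≤ ∑ h ∈ Finset.range H, (h : ℝ) := Finset.sum_le_sum hterm
      _ ≤ ∑ _h ∈ Finset.range H, (H : ℝ) := by
          refine Finset.sum_le_sum (fun h hh => ?_)
          exact_mod_cast le_of_lt (Finset.mem_range.mp hh)
      _ = H * H := by rw [Finset.sum_const, Finset.card_range, nsmul_eq_mul]
  -- Step 2
  have hcard : ((Finset.Icc 1 N).card : ℝ) = N := by
    rw [Nat.card_Icc]; simp
  have hASE : (∑ q ∈ Finset.Icc 1 N, A (n * q)) - E * N
      = ∑ q ∈ Finset.Icc 1 N, (A (n * q) - E) := by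
    rw [Finset.sum_sub_distrib, Finset.sum_const, nsmul_eq_mul, hcard]
    ring
  have hclaim2 : |(∑ q ∈ Finset.Icc 1 N, A (n * q)) - E * N|
      ≤ Real.sqrt ((N : ℝ) * ∑ m ∈ Finset.Icc 1 (n * N), (A m - E) ^ 2) := by
    rw [hASE]
    apply Real.abs_le_sqrt
    calc (∑ q ∈ Finset.Icc 1 N, (A (n * q) - E)) ^ 2
        ≤ ((Finset.Icc 1 N).card : ℝ) * ∑ q ∈ Finset.Icc 1 N, (A (n * q) - E) ^ 2 :=
          sq_sum_le_card_mul_sum_sq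
      _ ≤ (N : ℝ) * ∑ m ∈ Finset.Icc 1 (n * N), (A m - E) ^ 2 := by
          rw [hcard]
          exact mul_le_mul_of_nonneg_left
            (sum_ap_le (fun m => (A m - E) ^ 2) (fun m => sq_nonneg _) n N hn) hNpos.le
  -- Step 3
  have hSA : (∑ m ∈ Finset.Icc 1 (n * N), A m)
      = (∑ h ∈ Finset.range H, ∑ m ∈ Finset.Icc 1 (n * N), f (m + n * h)) / H := by
    simp only [hAdef]
    rw [← Finset.sum_div, Finset.sum_comm]
  have hSAlow : (E - δ) * ((n : ℝ) * N) ≤ ∑ m ∈ Finset.Icc 1 (n * N), A m := by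
    rw [hSA, le_div_iff₀ hHR]
    calc (E - δ) * ((n : ℝ) * N) * H
        = ∑ _h ∈ Finset.range H, (E - δ) * ((n : ℝ) * N) := by
          rw [Finset.sum_const, Finset.card_range, nsmul_eq_mul]; ring
      _ ≤ ∑ h ∈ Finset.range H, ∑ m ∈ Finset.Icc 1 (n * N), f (m + n * h) := by
          refine Finset.sum_le_sum (fun h hh => ?_)
          have hb := h1 h hh
          rw [abs_le] at hb
          linarith [hb.1]
  have hU : ∀ m : ℕ, A m ^ 2 = (∑ p ∈ Finset.range H ×ˢ Finset.range H,
      f (m + n * p.1) * f (m + n * p.2)) / (H : ℝ) ^ 2 := by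
    intro m
    have hA : A m = (∑ h ∈ Finset.range H, f (m + n * h)) / H := rfl
    rw [hA, div_pow, sq, Finset.sum_mul_sum, ← Finset.sum_product']
  have hSQ : (∑ m ∈ Finset.Icc 1 (n * N), A m ^ 2)
      = (∑ p ∈ Finset.range H ×ˢ Finset.range H,
          ∑ m ∈ Finset.Icc 1 (n * N), f (m + n * p.1) * f (m + n * p.2)) / (H : ℝ) ^ 2 := by
    rw [Finset.sum_congr rfl (fun m _ => hU m), ← Finset.sum_div, Finset.sum_comm]
  have hfarb : ∀ p ∈ (Finset.range H ×ˢ Finset.range H).filter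
      (fun p : ℕ × ℕ => M ≤ p.2 - p.1 ∨ M ≤ p.1 - p.2),
      (∑ m ∈ Finset.Icc 1 (n * N), f (m + n * p.1) * f (m + n * p.2))
        ≤ (E ^ 2 + δ) * ((n : ℝ) * N) := by
    intro p hp
    have hb := h2 p hp
    rw [abs_le] at hb
    linarith [hb.2]
  have hnearb : ∀ p ∈ (Finset.range H ×ˢ Finset.range H).filter
      (fun p : ℕ × ℕ => ¬(M ≤ p.2 - p.1 ∨ M ≤ p.1 - p.2)),
      (∑ m ∈ Finset.Icc 1 (n * N), f (m + n * p.1) * f (m + n * p.2))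
        ≤ (E + δ) * ((n : ℝ) * N) := by
    intro p hp
    simp only [Finset.mem_filter, Finset.mem_product, Finset.mem_range] at hp
    calc (∑ m ∈ Finset.Icc 1 (n * N), f (m + n * p.1) * f (m + n * p.2))
        ≤ ∑ m ∈ Finset.Icc 1 (n * N), f (m + n * p.1) :=
          Finset.sum_le_sum (fun m _ => mul_le_of_le_one_right (hf0 _) (hf1 _))
      _ ≤ (E + δ) * ((n : ℝ) * N) := by
          have hb := h1 p.1 (Finset.mem_range.mpr hp.1.1)
          rw [abs_le] at hb
          linarith [hb.2]
  have hEδ0 : (0 : ℝ) ≤ (E ^ 2 + δ) * ((n : ℝ) * N) := by positivity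
  have hEδ0' : (0 : ℝ) ≤ (E + δ) * ((n : ℝ) * N) := by positivity
  have hPsum : (∑ p ∈ Finset.range H ×ˢ Finset.range H,
      ∑ m ∈ Finset.Icc 1 (n * N), f (m + n * p.1) * f (m + n * p.2))
      ≤ (H : ℝ) ^ 2 * ((E ^ 2 + δ) * ((n : ℝ) * N))
        + ((H : ℝ) * (2 * M)) * ((E + δ) * ((n : ℝ) * N)) := by
    rw [← Finset.sum_filter_add_sum_filter_not (Finset.range H ×ˢ Finset.range H)
      (fun p : ℕ × ℕ => M ≤ p.2 - p.1 ∨ M ≤ p.1 - p.2)]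
    apply add_le_add
    · calc _ ≤ ∑ _p ∈ (Finset.range H ×ˢ Finset.range H).filter
            (fun p : ℕ × ℕ => M ≤ p.2 - p.1 ∨ M ≤ p.1 - p.2),
            (E ^ 2 + δ) * ((n : ℝ) * N) := Finset.sum_le_sum hfarb
        _ = (((Finset.range H ×ˢ Finset.range H).filter
            (fun p : ℕ × ℕ => M ≤ p.2 - p.1 ∨ M ≤ p.1 - p.2)).card : ℝ)
              * ((E ^ 2 + δ) * ((n : ℝ) * N)) := by
            rw [Finset.sum_const, nsmul_eq_mul]
        _ ≤ (H : ℝ) ^ 2 * ((E ^ 2 + δ) * ((n : ℝ) * N)) := by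
            apply mul_le_mul_of_nonneg_right _ hEδ0
            have hc : ((Finset.range H ×ˢ Finset.range H).filter
                (fun p : ℕ × ℕ => M ≤ p.2 - p.1 ∨ M ≤ p.1 - p.2)).card ≤ H * H := by
              calc _ ≤ (Finset.range H ×ˢ Finset.range H).card := Finset.card_filter_le _ _
                _ = H * H := by rw [Finset.card_product, Finset.card_range]
            calc (((Finset.range H ×ˢ Finset.range H).filter
                (fun p : ℕ × ℕ => M ≤ p.2 - p.1 ∨ M ≤ p.1 - p.2)).card : ℝ)
                ≤ ((H * H : ℕ) : ℝ) := by exact_mod_cast hc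
              _ = (H : ℝ) ^ 2 := by push_cast; ring
    · calc _ ≤ ∑ _p ∈ (Finset.range H ×ˢ Finset.range H).filter
            (fun p : ℕ × ℕ => ¬(M ≤ p.2 - p.1 ∨ M ≤ p.1 - p.2)),
            (E + δ) * ((n : ℝ) * N) := Finset.sum_le_sum hnearb
        _ = (((Finset.range H ×ˢ Finset.range H).filter
            (fun p : ℕ × ℕ => ¬(M ≤ p.2 - p.1 ∨ M ≤ p.1 - p.2))).card : ℝ)
              * ((E + δ) * ((n : ℝ) * N)) := by
            rw [Finset.sum_const, nsmul_eq_mul]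
        _ ≤ ((H : ℝ) * (2 * M)) * ((E + δ) * ((n : ℝ) * N)) := by
            apply mul_le_mul_of_nonneg_right _ hEδ0'
            calc (((Finset.range H ×ˢ Finset.range H).filter
                (fun p : ℕ × ℕ => ¬(M ≤ p.2 - p.1 ∨ M ≤ p.1 - p.2))).card : ℝ)
                ≤ ((H * (2 * M) : ℕ) : ℝ) := by exact_mod_cast near_card_le H M
              _ = (H : ℝ) * (2 * M) := by push_cast; ring
  have hRexp : (∑ m ∈ Finset.Icc 1 (n * N), (A m - E) ^ 2)
      = (∑ m ∈ Finset.Icc 1 (n * N), A m ^ 2)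
        - 2 * E * (∑ m ∈ Finset.Icc 1 (n * N), A m) + ((n : ℝ) * N) * E ^ 2 := by
    have hc : ((Finset.Icc 1 (n * N)).card : ℝ) = (n : ℝ) * N := by
      rw [Nat.card_Icc]; push_cast [Nat.add_sub_cancel]; ring
    calc (∑ m ∈ Finset.Icc 1 (n * N), (A m - E) ^ 2)
        = ∑ m ∈ Finset.Icc 1 (n * N), (A m ^ 2 - 2 * E * A m + E ^ 2) :=
          Finset.sum_congr rfl (fun m _ => by ring)
      _ = (∑ m ∈ Finset.Icc 1 (n * N), A m ^ 2)
          - (∑ m ∈ Finset.Icc 1 (n * N), 2 * E * A m)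
          + ∑ _m ∈ Finset.Icc 1 (n * N), E ^ 2 := by
          rw [Finset.sum_add_distrib, Finset.sum_sub_distrib]
      _ = _ := by
          rw [← Finset.mul_sum, Finset.sum_const, nsmul_eq_mul, hc]
  have hb1 : (∑ m ∈ Finset.Icc 1 (n * N), A m ^ 2)
      ≤ (E ^ 2 + δ) * ((n : ℝ) * N) + (2 * M * (E + δ) / H) * ((n : ℝ) * N) := by
    rw [hSQ, div_le_iff₀ (by positivity : (0 : ℝ) < (H : ℝ) ^ 2)]
    have heq : ((E ^ 2 + δ) * ((n : ℝ) * N) + (2 * M * (E + δ) / H) * ((n : ℝ) * N))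
        * (H : ℝ) ^ 2
        = (H : ℝ) ^ 2 * ((E ^ 2 + δ) * ((n : ℝ) * N))
          + ((H : ℝ) * (2 * M)) * ((E + δ) * ((n : ℝ) * N)) := by
      field_simp
    rw [heq]
    exact hPsum
  have hMH : 2 * (M : ℝ) * (E + δ) / H ≤ 2 * (M : ℝ) * (1 + δ) / H := by
    gcongr <;> linarith
  have hRle : (∑ m ∈ Finset.Icc 1 (n * N), (A m - E) ^ 2)
      ≤ ((n : ℝ) * N) * (3 * δ + 2 * M * (1 + δ) / H) := by
    rw [hRexp]
    have l1 : 2 * E * ((E - δ) * ((n : ℝ) * N)) ≤ 2 * E * (∑ m ∈ Finset.Icc 1 (n * N), A m) :=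
      mul_le_mul_of_nonneg_left hSAlow (by positivity)
    have hnN : (0 : ℝ) ≤ (n : ℝ) * N := by positivity
    have hXY : ((n : ℝ) * N) * (2 * (M : ℝ) * (E + δ) / H)
        ≤ ((n : ℝ) * N) * (2 * (M : ℝ) * (1 + δ) / H) :=
      mul_le_mul_of_nonneg_left hMH hnN
    have hEδ : E * δ ≤ δ := by nlinarith
    have hXEδ : ((n : ℝ) * N) * (E * δ) ≤ ((n : ℝ) * N) * δ :=
      mul_le_mul_of_nonneg_left hEδ hnN
    nlinarith [hb1, l1, hXY, hXEδ]
  -- Final assembly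
  have hsqrt : Real.sqrt ((N : ℝ) * ∑ m ∈ Finset.Icc 1 (n * N), (A m - E) ^ 2)
      ≤ (N : ℝ) * ε / 2 := by
    have hδ16 : (n : ℝ) * (3 * δ) = ε ^ 2 / 16 := by
      rw [hδdef]; field_simp; ring
    have hq : (N : ℝ) * ∑ m ∈ Finset.Icc 1 (n * N), (A m - E) ^ 2
        ≤ ((N : ℝ) * ε / 2) ^ 2 := by
      calc (N : ℝ) * ∑ m ∈ Finset.Icc 1 (n * N), (A m - E) ^ 2
          ≤ (N : ℝ) * (((n : ℝ) * N) * (3 * δ + 2 * M * (1 + δ) / H)) :=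
            mul_le_mul_of_nonneg_left hRle hNpos.le
        _ = (N : ℝ) ^ 2 * ((n : ℝ) * (3 * δ) + (n : ℝ) * (2 * M) * (1 + δ) / H) := by
            field_simp
        _ ≤ (N : ℝ) ^ 2 * (ε ^ 2 / 16 + ε ^ 2 / 16) := by
            apply mul_le_mul_of_nonneg_left _ (by positivity)
            linarith [hHbound]
        _ ≤ ((N : ℝ) * ε / 2) ^ 2 := by nlinarith [sq_nonneg ((N : ℝ) * ε)]
    calc Real.sqrt ((N : ℝ) * ∑ m ∈ Finset.Icc 1 (n * N), (A m - E) ^ 2)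
        ≤ Real.sqrt (((N : ℝ) * ε / 2) ^ 2) := Real.sqrt_le_sqrt hq
      _ = (N : ℝ) * ε / 2 := Real.sqrt_sq (by positivity)
  rw [Real.dist_eq]
  have hfrac : (∑ q ∈ Finset.Icc 1 N, f (n * q)) / N - E
      = ((∑ q ∈ Finset.Icc 1 N, f (n * q)) - E * N) / N := by
    field_simp [mul_comm]
  rw [hfrac, abs_div, abs_of_pos hNpos, div_lt_iff₀ hNpos]
  have htri : |(∑ q ∈ Finset.Icc 1 N, f (n * q)) - E * N|
      ≤ |(∑ q ∈ Finset.Icc 1 N, f (n * q)) - ∑ q ∈ Finset.Icc 1 N, A (n * q)|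
        + |(∑ q ∈ Finset.Icc 1 N, A (n * q)) - E * N| := abs_sub_le _ _ _
  have hH4 : (H : ℝ) < ε / 4 * N := by
    rw [div_lt_iff₀ hNpos] at h3
    linarith
  have h1' : |(∑ q ∈ Finset.Icc 1 N, f (n * q)) - ∑ q ∈ Finset.Icc 1 N, A (n * q)| ≤ H := by
    rw [abs_sub_comm]
    exact hclaim1
  calc |(∑ q ∈ Finset.Icc 1 N, f (n * q)) - E * N|
      ≤ (H : ℝ) + ((N : ℝ) * ε / 2) := by
        refine le_trans htri (add_le_add h1' (le_trans hclaim2 hsqrt))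
    _ < ε * N := by nlinarith [hH4]

set_option maxHeartbeats 1000000 in
/-- If `x : ℕ → {0,1}` is classical normal, then for every `n ≥ 1` the sequence
`k ↦ x (n·k)` is also classical normal. -/
theorem classicalNormal_along_multiples
    (x : ℕ → Bool) (hx : ClassicalNormalFun x) (n : ℕ) (hn : 0 < n) :
    ClassicalNormalFun (fun k => x (n * k)) := by
  intro K hK hKpos B
  set E : ℝ := (1 / 2 : ℝ) ^ K.card with hEdef
  have hE0 : 0 ≤ E := by positivity
  have hE1 : E ≤ 1 := by
    rw [hEdef]
    exact pow_le_one₀ (by norm_num) (by norm_num)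
  set f : ℕ → ℝ := fun m => if ∀ k ∈ K, x (n * k + m) = B k then 1 else 0 with hfdef
  have hf0 : ∀ m, 0 ≤ f m := by
    intro m; rw [hfdef]; dsimp only; split <;> norm_num
  have hf1 : ∀ m, f m ≤ 1 := by
    intro m; rw [hfdef]; dsimp only; split <;> norm_num
  set M : ℕ := K.max' hK with hMdef
  have hM : 1 ≤ M := hKpos _ (K.max'_mem hK)
  have hinj : Function.Injective (fun k : ℕ => n * k) :=
    fun a b h => Nat.eq_of_mul_eq_mul_left hn h
  have C1 : Tendsto (fun N : ℕ => (∑ m ∈ Finset.Icc 1 N, f m) / N) atTop (nhds E) := by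
    have hposim : ∀ s ∈ K.image (fun k => n * k), 0 < s := by
      intro s hs
      simp only [Finset.mem_image] at hs
      obtain ⟨a, ha, rfl⟩ := hs
      exact Nat.mul_pos hn (hKpos a ha)
    have h := hx (K.image (fun k => n * k)) (hK.image _) hposim (fun s => B (s / n))
    rw [Finset.card_image_of_injective _ hinj] at h
    refine Tendsto.congr (fun N => ?_) h
    congr 1
    rw [show ((Finset.Icc 1 N).filter
        (fun m => ∀ s ∈ K.image (fun k => n * k), x (s + m) = B (s / n)))
        = (Finset.Icc 1 N).filter (fun m => ∀ k ∈ K, x (n * k + m) = B k) from ?_]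
    · rw [Finset.sum_boole]
    · apply Finset.filter_congr
      intro m _
      rw [Finset.forall_mem_image]
      constructor
      · intro hall k hk
        have := hall (x := k) hk
        rwa [Nat.mul_div_cancel_left k hn] at this
      · intro hall k hk
        rw [Nat.mul_div_cancel_left k hn]
        exact hall k hk
  have C2 : ∀ d : ℕ, M ≤ d →
      Tendsto (fun N : ℕ => (∑ m ∈ Finset.Icc 1 N, f m * f (m + n * d)) / N)
        atTop (nhds (E ^ 2)) := by
    intro d hd
    have hnotmem : ∀ k ∈ K, k + d ∉ K := by
      intro k hk hmem
      have h1 := Finset.le_max' K (k + d) hmem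
      have h2 := hKpos k hk
      omega
    have hdisj : Disjoint K (K.image (fun k => k + d)) := by
      rw [Finset.disjoint_right]
      intro a ha
      simp only [Finset.mem_image] at ha
      obtain ⟨k, hk, rfl⟩ := ha
      exact hnotmem k hk
    set K₂ : Finset ℕ := K ∪ K.image (fun k => k + d) with hK2
    have hcard2 : K₂.card = 2 * K.card := by
      rw [hK2, Finset.card_union_of_disjoint hdisj,
        Finset.card_image_of_injective _ (add_left_injective d)]
      ring
    have hK2ne : K₂.Nonempty := hK.mono Finset.subset_union_left
    have hpos2 : ∀ k ∈ K₂, 0 < k := by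
      intro k hk
      rw [hK2, Finset.mem_union] at hk
      rcases hk with hk | hk
      · exact hKpos k hk
      · simp only [Finset.mem_image] at hk
        obtain ⟨a, ha, rfl⟩ := hk
        have := hKpos a ha
        omega
    set B₃ : ℕ → Bool := fun k => if k ∈ K then B k else B (k - d) with hB3
    have hposim2 : ∀ s ∈ K₂.image (fun k => n * k), 0 < s := by
      intro s hs
      simp only [Finset.mem_image] at hs
      obtain ⟨a, ha, rfl⟩ := hs
      exact Nat.mul_pos hn (hpos2 a ha)
    have h := hx (K₂.image (fun k => n * k)) (hK2ne.image _) hposim2 (fun s => B₃ (s / n))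
    rw [Finset.card_image_of_injective _ hinj, hcard2] at h
    have hval : ((1 : ℝ) / 2) ^ (2 * K.card) = E ^ 2 := by
      rw [hEdef, two_mul, pow_add, sq]
    rw [hval] at h
    refine Tendsto.congr (fun N => ?_) h
    congr 1
    have hprod : ∀ m : ℕ, f m * f (m + n * d)
        = if ((∀ k ∈ K, x (n * k + m) = B k)
            ∧ (∀ k ∈ K, x (n * k + (m + n * d)) = B k)) then (1 : ℝ) else 0 := by
      intro m
      rw [hfdef]
      dsimp only
      by_cases h1 : ∀ k ∈ K, x (n * k + m) = B k
      · by_cases h2 : ∀ k ∈ K, x (n * k + (m + n * d)) = B k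
        · rw [if_pos h1, if_pos h2, if_pos (And.intro h1 h2)]; norm_num
        · rw [if_pos h1, if_neg h2, if_neg (fun hc => h2 hc.2)]; norm_num
      · rw [if_neg h1, zero_mul, if_neg (fun hc => h1 hc.1)]
    rw [Finset.sum_congr rfl (fun m _ => hprod m), Finset.sum_boole]
    congr 1
    congr 1
    apply Finset.filter_congr
    intro m _
    rw [Finset.forall_mem_image]
    have hB3eval : ∀ k ∈ K, B₃ ((n * k) / n) = B k := by
      intro k hk
      rw [Nat.mul_div_cancel_left k hn, hB3]
      dsimp only
      rw [if_pos hk]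
    have hB3eval2 : ∀ k ∈ K, B₃ ((n * (k + d)) / n) = B k := by
      intro k hk
      rw [Nat.mul_div_cancel_left (k + d) hn, hB3]
      dsimp only
      rw [if_neg (hnotmem k hk)]
      congr 1
      omega
    have harg : ∀ k : ℕ, n * (k + d) + m = n * k + (m + n * d) := by
      intro k; ring
    constructor
    · intro hall
      constructor
      · intro k hk
        have := hall (x := k) (Finset.mem_union_left _ hk)
        rwa [hB3eval k hk] at this
      · intro k hk
        have := hall (x := k + d) (Finset.mem_union_right _
          (Finset.mem_image_of_mem _ hk))
        rwa [hB3eval2 k hk, harg k] at this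
    · rintro ⟨ha1, ha2⟩ k hk
      rw [hK2, Finset.mem_union] at hk
      rcases hk with hk | hk
      · rw [hB3eval k hk]
        exact ha1 k hk
      · simp only [Finset.mem_image] at hk
        obtain ⟨a, ha, rfl⟩ := hk
        rw [hB3eval2 a ha, harg a]
        exact ha2 a ha
  have main := key_lemma f hf0 hf1 n M hn hM E hE0 hE1 C1 C2
  refine Tendsto.congr (fun N => ?_) main
  congr 1
  have hfq : ∀ q : ℕ, f (n * q)
      = if (∀ k ∈ K, x (n * (k + q)) = B k) then (1 : ℝ) else 0 := by
    intro q
    rw [hfdef]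
    dsimp only
    apply if_congr _ rfl rfl
    constructor
    · intro hall k hk
      have := hall k hk
      rwa [show n * k + n * q = n * (k + q) from by ring] at this
    · intro hall k hk
      have := hall k hk
      rwa [show n * (k + q) = n * k + n * q from by ring] at this
  rw [Finset.sum_congr rfl (fun q _ => hfq q), Finset.sum_boole]
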